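/- Let G be a finite simple connected graph on n vertices whose edge set E has exactly n elements (so that G is a uni-cyclic graph U_{n,m}), and let c be a cycle in G of length m (3 ≤ m ≤ n) with edge set C = {e_1, ..., e_m}. Then the spanning simplicial complex Δ_s(U_{n,m}) has dimension n − 2, and its f-vector (f_0, f_1, ..., f_{n−2}) satisfies: f_i = C(n, i+1) for 0 ≤ i ≤ m − 2, and f_i = C(n, i+1) − C(n−m, i−m+1) for m − 2 < i ≤ n − 2, where f_i is the number of subsets of E of cardinality i+1 that are contained in the edge set of some spanning tree of G. -/

import Mathlib

/-- `F` is a face of the spanning simplicial complex `Δ_s(G)`: `F` is contained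
in the edge set of some spanning tree of `G` (a subset `T` of the edges of `G`
such that the spanning subgraph with edge set `T` is a tree). -/
def IsSpanningFace {V : Type*} [Fintype V] [DecidableEq V]
    (G : SimpleGraph V) [DecidableRel G.Adj] (F : Finset (Sym2 V)) : Prop :=
  ∃ T : Finset (Sym2 V), T ⊆ G.edgeFinset ∧
    (SimpleGraph.fromEdgeSet (↑T : Set (Sym2 V))).IsTree ∧ F ⊆ T

section Aux

set_option linter.unusedSectionVars false

open SimpleGraph Finset

variable {V : Type*} [Fintype V] [DecidableEq V]

private lemma reach_delete {H : SimpleGraph V} {a b : V}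
    (hr : (H.deleteEdges {s(a, b)}).Reachable a b) :
    ∀ {x y : V}, H.Walk x y → (H.deleteEdges {s(a, b)}).Reachable x y := by
  intro x y w
  induction w with
  | nil => exact Reachable.refl _
  | @cons u u' w' h q ih =>
    by_cases he : s(u, u') = s(a, b)
    · rw [Sym2.eq_iff] at he
      obtain ⟨rfl, rfl⟩ | ⟨rfl, rfl⟩ := he
      · exact hr.trans ih
      · exact hr.symm.trans ih
    · exact (Reachable.trans ⟨Walk.cons (deleteEdges_adj.mpr ⟨h, by simpa using he⟩) Walk.nil⟩ ih)

private lemma connected_delete {H : SimpleGraph V} (hconn : H.Connected)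
    {u : V} {p : H.Walk u u} (hp : p.IsCycle) {e : Sym2 V} (he : e ∈ p.edges) :
    (H.deleteEdges {e}).Connected := by
  induction e with
  | _ a b =>
    have hr : (H \ fromEdgeSet {s(a, b)}).Reachable a b :=
      (adj_and_reachable_delete_edges_iff_exists_cycle.mpr ⟨u, p, hp, he⟩).2
    have hr' : (H.deleteEdges {s(a, b)}).Reachable a b := hr
    have : Nonempty V := hconn.nonempty
    apply Connected.mk
    intro x y
    obtain ⟨w⟩ := hconn.preconnected x y
    exact reach_delete hr' w

private lemma edgeFinset_card_eq_ncard (H : SimpleGraph V) [Fintype H.edgeSet] :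
    H.edgeFinset.card = H.edgeSet.ncard := by
  rw [edgeFinset, Set.toFinset_card, ← Nat.card_eq_fintype_card, Nat.card_coe_set_eq]

private lemma card_le_aux : ∀ (k : ℕ) (H : SimpleGraph V), H.Connected →
    H.edgeSet.ncard = k → Fintype.card V ≤ k + 1 := by
  intro k
  induction k using Nat.strong_induction_on with
  | _ k ih =>
    intro H hconn hk
    classical
    by_cases hac : H.IsAcyclic
    · have ht : H.IsTree := ⟨hconn, hac⟩
      have := ht.card_edgeFinset
      rw [edgeFinset_card_eq_ncard, hk] at this
      omega
    · simp only [IsAcyclic, not_forall, not_not] at hac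
      obtain ⟨u, p, hp⟩ := hac
      have hlen : 3 ≤ p.length := hp.three_le_length
      have hne : p.edges ≠ [] := by
        intro h
        have := p.length_edges
        rw [h] at this
        simp at this
        omega
      obtain ⟨e, hep⟩ := List.exists_mem_of_ne_nil _ hne
      have heH : e ∈ H.edgeSet := p.edges_subset_edgeSet hep
      have hconn' := connected_delete hconn hp hep
      have hfin : H.edgeSet.Finite := Set.toFinite _
      have hkpos : 1 ≤ k := by
        rw [← hk]
        exact (Set.ncard_pos hfin).mpr ⟨e, heH⟩
      have hcard' : (H.deleteEdges {e}).edgeSet.ncard = k - 1 := by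
        rw [edgeSet_deleteEdges, Set.ncard_diff_singleton_of_mem heH, hk]
      have := ih (k - 1) (by omega) _ hconn' hcard'
      omega

private lemma isTree_of_card (H : SimpleGraph V) [Fintype H.edgeSet] (hconn : H.Connected)
    (hcard : H.edgeFinset.card + 1 = Fintype.card V) : H.IsTree := by
  refine ⟨hconn, ?_⟩
  by_contra hac
  simp only [IsAcyclic, not_forall, not_not] at hac
  obtain ⟨u, p, hp⟩ := hac
  have hne : p.edges ≠ [] := by
    have h3 := hp.three_le_length
    have hl := p.length_edges
    intro h; rw [h] at hl; simp at hl; omega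
  obtain ⟨e, hep⟩ := List.exists_mem_of_ne_nil _ hne
  have heH : e ∈ H.edgeSet := p.edges_subset_edgeSet hep
  have hconn' := connected_delete hconn hp hep
  have hfin : H.edgeSet.Finite := Set.toFinite _
  have hcard' : (H.deleteEdges {e}).edgeSet.ncard = H.edgeSet.ncard - 1 := by
    rw [edgeSet_deleteEdges, Set.ncard_diff_singleton_of_mem heH]
  have h1 : 1 ≤ H.edgeSet.ncard := (Set.ncard_pos hfin).mpr ⟨e, heH⟩
  have h2 := card_le_aux _ _ hconn' hcard'
  rw [edgeFinset_card_eq_ncard] at hcard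
  omega

end Aux

open SimpleGraph Finset in
/-- For a uni-cyclic graph `U_{n,m}` (a finite simple connected graph on `n`
vertices with exactly `n` edges) with cycle of length `m` (`3 ≤ m ≤ n`), the
spanning simplicial complex `Δ_s(U_{n,m})` has dimension `n - 2` (its faces
have at most `n - 1` elements and some face has exactly `n - 1` elements), and
its `f`-vector satisfies `f i = C(n, i+1)` for `i ≤ m - 2` and
`f i = C(n, i+1) - C(n-m, i+1-m)` for `m - 2 < i ≤ n - 2`. -/
theorem fvector_of_unicyclic
    {V : Type*} [Fintype V] [DecidableEq V] (n m : ℕ)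
    (hm3 : 3 ≤ m) (hmn : m ≤ n)
    (G : SimpleGraph V) [DecidableRel G.Adj]
    (hconn : G.Connected)
    (hV : Fintype.card V = n)
    (hE : G.edgeFinset.card = n)
    (v : V) (c : G.Walk v v) (hc : c.IsCycle) (hm : c.length = m) :
    ((∃ F : Finset (Sym2 V), IsSpanningFace G F ∧ F.card = n - 1) ∧
      (∀ F : Finset (Sym2 V), IsSpanningFace G F → F.card ≤ n - 1)) ∧
    (∀ i : ℕ, i ≤ m - 2 →
      {F : Finset (Sym2 V) | IsSpanningFace G F ∧ F.card = i + 1}.ncard =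
        n.choose (i + 1)) ∧
    (∀ i : ℕ, m - 2 < i → i ≤ n - 2 →
      {F : Finset (Sym2 V) | IsSpanningFace G F ∧ F.card = i + 1}.ncard =
        n.choose (i + 1) - (n - m).choose (i + 1 - m)) := by
  classical
  set E := G.edgeFinset with hEdef
  set C := c.edges.toFinset with hCdef
  have hCcard : C.card = m := by
    rw [hCdef, List.toFinset_card_of_nodup hc.edges_nodup, c.length_edges, hm]
  have hCE : C ⊆ E := by
    intro e he
    rw [hEdef, mem_edgeFinset]
    exact c.edges_subset_edgeSet (List.mem_toFinset.mp (hCdef ▸ he))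
  have htree : ∀ e ∈ C, (fromEdgeSet (↑(E \ {e}) : Set (Sym2 V))).IsTree := by
    intro e he
    have hee : e ∈ E := hCE he
    have hset : (↑(E \ {e}) : Set (Sym2 V)) = G.edgeSet \ {e} := by
      rw [Finset.coe_sdiff, Finset.coe_singleton, hEdef, coe_edgeFinset]
    have heq : fromEdgeSet (↑(E \ {e}) : Set (Sym2 V)) = G.deleteEdges {e} := by
      rw [← edgeSet_inj, edgeSet_fromEdgeSet, edgeSet_deleteEdges, hset]
      ext x
      simp only [Set.mem_diff, Set.mem_setOf_eq, Set.mem_singleton_iff]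
      constructor
      · rintro ⟨h1, _⟩; exact h1
      · intro h1; exact ⟨h1, G.not_isDiag_of_mem_edgeSet h1.1⟩
    rw [heq]
    have hconn' := connected_delete hconn hc (List.mem_toFinset.mp (hCdef ▸ he))
    apply isTree_of_card _ hconn'
    have hcd : (G.deleteEdges {e}).edgeFinset.card = n - 1 := by
      rw [edgeFinset_card_eq_ncard, edgeSet_deleteEdges,
        Set.ncard_diff_singleton_of_mem (mem_edgeFinset.mp hee),
        ← edgeFinset_card_eq_ncard, hE]
    rw [hcd, hV]; omega
  have htreeT : ∀ T : Finset (Sym2 V), T ⊆ E →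
      (fromEdgeSet (↑T : Set (Sym2 V))).IsTree → T.card = n - 1 ∧ ¬ C ⊆ T := by
    intro T hTE ht
    have hTedge : (fromEdgeSet (↑T : Set (Sym2 V))).edgeSet = ↑T := by
      rw [edgeSet_fromEdgeSet]
      ext x
      simp only [Set.mem_diff, Set.mem_setOf_eq, Finset.mem_coe]
      constructor
      · rintro ⟨h1, _⟩; exact h1
      · intro h1; exact ⟨h1, G.not_isDiag_of_mem_edgeSet (mem_edgeFinset.mp (hTE h1))⟩
    have hcardT : T.card = n - 1 := by
      have h1 := ht.card_edgeFinset
      rw [edgeFinset_card_eq_ncard, hTedge, Set.ncard_coe_finset, hV] at h1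
      omega
    refine ⟨hcardT, fun hCT => ?_⟩
    have hsub : ∀ e ∈ c.edges, e ∈ (fromEdgeSet (↑T : Set (Sym2 V))).edgeSet := by
      intro e he
      rw [hTedge]
      exact hCT (hCdef ▸ List.mem_toFinset.mpr he)
    exact ht.2 _ (hc.transfer hsub)
  have hface : ∀ F : Finset (Sym2 V), IsSpanningFace G F ↔ F ⊆ E ∧ ¬ C ⊆ F := by
    intro F
    constructor
    · rintro ⟨T, hTE, ht, hFT⟩
      obtain ⟨_, hnC⟩ := htreeT T hTE ht
      exact ⟨hFT.trans hTE, fun h => hnC (h.trans hFT)⟩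
    · rintro ⟨hFE, hnC⟩
      obtain ⟨e, heC, heF⟩ := Finset.not_subset.mp hnC
      refine ⟨E \ {e}, Finset.sdiff_subset, htree e heC, fun x hx => ?_⟩
      rw [Finset.mem_sdiff, Finset.mem_singleton]
      exact ⟨hFE hx, fun h => heF (h ▸ hx)⟩
  have hCne : C.Nonempty := by rw [← Finset.card_pos, hCcard]; omega
  obtain ⟨e0, he0⟩ := hCne
  have hsetk : ∀ k : ℕ, {F : Finset (Sym2 V) | IsSpanningFace G F ∧ F.card = k}.ncard =
      ((E.powersetCard k).filter (fun F => ¬ C ⊆ F)).card := by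
    intro k
    rw [← Set.ncard_coe_finset]
    congr 1
    ext F
    simp only [Set.mem_setOf_eq, Finset.coe_filter, Finset.mem_powersetCard, hface]
    tauto
  refine ⟨⟨⟨E \ {e0}, ⟨E \ {e0}, Finset.sdiff_subset, htree e0 he0, Finset.Subset.refl _⟩, ?_⟩, ?_⟩,
    ?_, ?_⟩
  · rw [Finset.card_sdiff_of_subset (Finset.singleton_subset_iff.mpr (hCE he0)), hE, Finset.card_singleton]
  · rintro F ⟨T, hTE, ht, hFT⟩
    have h1 := (htreeT T hTE ht).1
    calc F.card ≤ T.card := Finset.card_le_card hFT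
    _ = n - 1 := h1
  · intro i hi
    rw [hsetk, Finset.filter_true_of_mem, Finset.card_powersetCard, hE]
    intro F hF hCF
    have h1 := Finset.card_le_card hCF
    rw [hCcard, (Finset.mem_powersetCard.mp hF).2] at h1
    omega
  · intro i hi1 hi2
    have hmk : m ≤ i + 1 := by omega
    have hEC : (E \ C).card = n - m := by rw [Finset.card_sdiff_of_subset hCE, hE, hCcard]
    have hA : ((E.powersetCard (i + 1)).filter (fun F => C ⊆ F)).card =
        (n - m).choose (i + 1 - m) := by
      rw [← hEC, ← Finset.card_powersetCard]
      apply Finset.card_bij' (fun F _ => F \ C) (fun D _ => D ∪ C)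
      · intro F hF
        rw [Finset.mem_filter, Finset.mem_powersetCard] at hF
        obtain ⟨⟨hFE, hFc⟩, hCF⟩ := hF
        rw [Finset.mem_powersetCard]
        exact ⟨Finset.sdiff_subset_sdiff hFE (Finset.Subset.refl C),
          by rw [Finset.card_sdiff_of_subset hCF, hFc, hCcard]⟩
      · intro D hD
        rw [Finset.mem_powersetCard] at hD
        obtain ⟨hDE, hDc⟩ := hD
        have hdisj : Disjoint D C := Finset.disjoint_of_subset_left hDE Finset.sdiff_disjoint
        rw [Finset.mem_filter, Finset.mem_powersetCard]
        refine ⟨⟨Finset.union_subset (hDE.trans Finset.sdiff_subset) hCE, ?_⟩,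
          Finset.subset_union_right⟩
        rw [Finset.card_union_of_disjoint hdisj, hDc, hCcard]
        omega
      · intro F hF
        rw [Finset.mem_filter] at hF
        exact Finset.sdiff_union_of_subset hF.2
      · intro D hD
        rw [Finset.mem_powersetCard] at hD
        exact Finset.union_sdiff_cancel_right
          (Finset.disjoint_of_subset_left hD.1 Finset.sdiff_disjoint)
    rw [hsetk, Finset.filter_not, Finset.card_sdiff_of_subset (Finset.filter_subset _ _),
      Finset.card_powersetCard, hE, hA]
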